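/- arXiv:1203.0130 — 7 statements merged into one kernel-verified Lean document; each statement's English description precedes it below -/
import Mathlib

section
/- For any real numbers a, b > 0 there exist constants 0 < c < C (depending only on a and b) such that for all x, y > 0: c·|x^(a+b) − y^(a+b)| ≤ (x^a + y^a)·|x^b − y^b| ≤ C·|x^(a+b) − y^(a+b)|. -/
open Real

-- helper: for 0 < t ≤ 1, 1 - t^a ≤ max 1 (a/b) * (1 - t^b)
lemma aux_one_sub (a b : ℝ) (ha : 0 < a) (hb : 0 < b) {t : ℝ} (ht : 0 < t) (ht1 : t ≤ 1) :
    1 - t ^ a ≤ max 1 (a / b) * (1 - t ^ b) := by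
  have htb : t ^ b ≤ 1 := Real.rpow_le_one ht.le ht1 hb.le
  rcases le_total a b with hab | hab
  · have h1 : t ^ b ≤ t ^ a := Real.rpow_le_rpow_of_exponent_ge ht ht1 hab
    calc 1 - t ^ a ≤ 1 - t ^ b := by linarith
    _ = 1 * (1 - t ^ b) := (one_mul _).symm
    _ ≤ max 1 (a / b) * (1 - t ^ b) := by
        apply mul_le_mul_of_nonneg_right (le_max_left _ _); linarith
  · have hr : 1 ≤ a / b := (one_le_div hb).mpr hab
    have hta : t ^ a = (t ^ b) ^ (a / b) := by
      rw [← Real.rpow_mul ht.le]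
      congr 1
      field_simp
    have hbern := one_add_mul_self_le_rpow_one_add (s := t ^ b - 1)
      (by nlinarith [Real.rpow_pos_of_pos ht b]) hr
    rw [add_sub_cancel] at hbern
    have : 1 + (a / b) * (t ^ b - 1) ≤ t ^ a := by rw [hta]; exact hbern
    calc 1 - t ^ a ≤ (a / b) * (1 - t ^ b) := by nlinarith
    _ ≤ max 1 (a / b) * (1 - t ^ b) := by
        apply mul_le_mul_of_nonneg_right (le_max_right _ _); linarith

-- ordered key lemma
lemma aux_key (a b : ℝ) (ha : 0 < a) (hb : 0 < b) {x y : ℝ} (hy : 0 < y) (hxy : y ≤ x) :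
    x ^ (a + b) - y ^ (a + b) ≤ (1 + max 1 (a / b)) * ((x ^ a + y ^ a) * (x ^ b - y ^ b)) ∧
    (x ^ a + y ^ a) * (x ^ b - y ^ b) ≤ 2 * (x ^ (a + b) - y ^ (a + b)) := by
  have hx : 0 < x := hy.trans_le hxy
  set t := y / x with htd
  have ht : 0 < t := div_pos hy hx
  have ht1 : t ≤ 1 := (div_le_one hx).mpr hxy
  have hta : y ^ a = x ^ a * t ^ a := by
    rw [htd, Real.div_rpow hy.le hx.le]; field_simp
  have htb : y ^ b = x ^ b * t ^ b := by
    rw [htd, Real.div_rpow hy.le hx.le]; field_simp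
  have htab : y ^ (a + b) = x ^ (a + b) * (t ^ a * t ^ b) := by
    rw [Real.rpow_add hy, Real.rpow_add hx, hta, htb]; ring
  have hxab : x ^ (a + b) = x ^ a * x ^ b := Real.rpow_add hx a b
  have hM := aux_one_sub a b ha hb ht ht1
  have hM1 : (1:ℝ) ≤ max 1 (a / b) := le_max_left _ _
  have hxa := Real.rpow_pos_of_pos hx a
  have hxb := Real.rpow_pos_of_pos hx b
  have hya := Real.rpow_pos_of_pos hy a
  have htaa : t ^ a ≤ 1 := Real.rpow_le_one ht.le ht1 ha.le
  have htbb : t ^ b ≤ 1 := Real.rpow_le_one ht.le ht1 hb.le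
  have hta0 := Real.rpow_pos_of_pos ht a
  have htb0 := Real.rpow_pos_of_pos ht b
  constructor
  · rw [htab, hxab, hta, htb]
    nlinarith [mul_le_mul_of_nonneg_left hM (mul_pos hxa hxb).le,
      mul_nonneg (mul_nonneg (mul_pos hxa hxb).le hta0.le) (sub_nonneg.mpr htbb),
      mul_nonneg (mul_pos hxa hxb).le (sub_nonneg.mpr htbb),
      mul_nonneg (mul_nonneg (mul_nonneg (mul_pos hxa hxb).le hta0.le) (sub_nonneg.mpr htbb)) (by linarith : (0:ℝ) ≤ max 1 (a/b) - 1)]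
  · rw [htab, hxab, hta, htb]
    nlinarith [mul_nonneg (mul_pos hxa hxb).le
      (mul_nonneg (sub_nonneg.mpr htaa) (by positivity : (0:ℝ) ≤ 1 + t ^ b))]

/-- For any `a, b > 0` there exist constants `0 < c < C` (depending only on `a, b`)
such that for all `x, y > 0`:
`c * |x^(a+b) - y^(a+b)| ≤ (x^a + y^a) * |x^b - y^b| ≤ C * |x^(a+b) - y^(a+b)|`. -/
theorem stmt_0 (a b : ℝ) (ha : 0 < a) (hb : 0 < b) :
    ∃ c C : ℝ, 0 < c ∧ c < C ∧
      ∀ x y : ℝ, 0 < x → 0 < y →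
        c * |x ^ (a + b) - y ^ (a + b)| ≤ (x ^ a + y ^ a) * |x ^ b - y ^ b| ∧
        (x ^ a + y ^ a) * |x ^ b - y ^ b| ≤ C * |x ^ (a + b) - y ^ (a + b)| := by
  set M := max 1 (a / b) with hMd
  have hM1 : (1:ℝ) ≤ M := le_max_left _ _
  refine ⟨1 / (1 + M), 2, by positivity, by
    rw [div_lt_iff₀ (by linarith)]; linarith, ?_⟩
  -- main claim for ordered pairs
  have main : ∀ x y : ℝ, 0 < y → y ≤ x →
      1 / (1 + M) * |x ^ (a + b) - y ^ (a + b)| ≤ (x ^ a + y ^ a) * |x ^ b - y ^ b| ∧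
      (x ^ a + y ^ a) * |x ^ b - y ^ b| ≤ 2 * |x ^ (a + b) - y ^ (a + b)| := by
    intro x y hy hxy
    have hx : 0 < x := hy.trans_le hxy
    have h1 : y ^ (a+b) ≤ x ^ (a+b) := Real.rpow_le_rpow hy.le hxy (by linarith)
    have h2 : y ^ b ≤ x ^ b := Real.rpow_le_rpow hy.le hxy hb.le
    rw [abs_of_nonneg (sub_nonneg.mpr h1), abs_of_nonneg (sub_nonneg.mpr h2)]
    obtain ⟨hk1, hk2⟩ := aux_key a b ha hb hy hxy
    constructor
    · rw [div_mul_eq_mul_div, div_le_iff₀ (by linarith)]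
      calc 1 * (x ^ (a + b) - y ^ (a + b)) = x ^ (a + b) - y ^ (a + b) := one_mul _
      _ ≤ (1 + M) * ((x ^ a + y ^ a) * (x ^ b - y ^ b)) := hk1
      _ = (x ^ a + y ^ a) * (x ^ b - y ^ b) * (1 + M) := by ring
    · exact hk2
  intro x y hx hy
  rcases le_total y x with h | h
  · exact main x y hy h
  · have := main y x hx h
    rw [abs_sub_comm (y ^ (a+b)), abs_sub_comm (y ^ b), add_comm (y ^ a)] at this
    exact this
end

section
/- Let g be a probability measure on ℝ³ with the property that whenever v₁, v₂ belong to the support of g, the entire sphere S((v₁+v₂)/2, |v₁−v₂|/2) is contained in the support of g. If g is not a Dirac mass, then the support of g is all of ℝ³. -/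
open MeasureTheory Metric

open scoped ENNReal RealInnerProductSpace

local notation "E" => EuclideanSpace ℝ (Fin 3)

lemma exists_unit_orthogonal (v : E) : ∃ u : E, ‖u‖ = 1 ∧ ⟪u, v⟫ = 0 := by
  rcases eq_or_ne v 0 with rfl | hv
  · exact ⟨EuclideanSpace.single 0 1, by simp, inner_zero_right _⟩
  have hK : (Submodule.span ℝ {v})ᗮ ≠ ⊥ := by
    intro h
    rw [Submodule.orthogonal_eq_bot_iff] at h
    have h1 : Module.finrank ℝ (Submodule.span ℝ {v}) = 1 :=
      finrank_span_singleton hv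
    rw [h] at h1
    simp [finrank_euclideanSpace_fin] at h1
  obtain ⟨w, hw, hw0⟩ := Submodule.exists_mem_ne_zero_of_ne_bot hK
  refine ⟨‖w‖⁻¹ • w, ?_, ?_⟩
  · rw [norm_smul]
    simp [norm_ne_zero_iff.2 hw0]
  · have := (Submodule.mem_orthogonal _ w).1 hw v (Submodule.mem_span_singleton_self v)
    rw [real_inner_smul_left]
    rw [real_inner_comm] at this
    rw [this]; ring

lemma norm_eq_of_sq_eq {a : E} {s : ℝ} (hs : 0 ≤ s) (h : ‖a‖ ^ 2 = s ^ 2) : ‖a‖ = s := by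
  have := Real.sqrt_sq (norm_nonneg a)
  rw [← this, h, Real.sqrt_sq hs]

lemma exists_two_sphere_point (c y : E) {s : ℝ} (hs : 0 ≤ s) (h : ‖y - c‖ ≤ 2 * s) :
    ∃ m : E, ‖m - c‖ = s ∧ ‖m - y‖ = s := by
  set w : E := y - c with hw
  obtain ⟨u, hu1, hu0⟩ := exists_unit_orthogonal w
  have hwu : ⟪w, u⟫ = 0 := by rw [real_inner_comm]; exact hu0
  have hw2 : ‖w‖ ^ 2 ≤ 4 * s ^ 2 := by nlinarith [norm_nonneg w]
  set t : ℝ := Real.sqrt (s ^ 2 - ‖w‖ ^ 2 / 4) with ht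
  have ht2 : t ^ 2 = s ^ 2 - ‖w‖ ^ 2 / 4 := Real.sq_sqrt (by linarith)
  refine ⟨c + (2⁻¹ : ℝ) • w + t • u, ?_, ?_⟩
  · have e : c + (2⁻¹ : ℝ) • w + t • u - c = (2⁻¹ : ℝ) • w + t • u := by module
    rw [e]
    apply norm_eq_of_sq_eq hs
    rw [norm_add_sq_real, real_inner_smul_left, real_inner_smul_right, hwu]
    simp only [norm_smul, Real.norm_eq_abs, hu1, mul_pow, sq_abs, mul_one, mul_zero]
    nlinarith [ht2]
  · have e : c + (2⁻¹ : ℝ) • w + t • u - y = (-(2⁻¹ : ℝ)) • w + t • u := by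
      rw [hw]; module
    rw [e]
    apply norm_eq_of_sq_eq hs
    rw [norm_add_sq_real, real_inner_smul_left, real_inner_smul_right, hwu]
    simp only [norm_smul, Real.norm_eq_abs, hu1, mul_pow, sq_abs, mul_one, mul_zero]
    nlinarith [ht2]

lemma closedBall_subset_of_sphere_subset (S : Set E)
    (hs : ∀ v₁ v₂ : E, v₁ ∈ S → v₂ ∈ S →
      sphere ((2:ℝ)⁻¹ • (v₁ + v₂)) (‖v₁ - v₂‖ / 2) ⊆ S)
    {c : E} {r : ℝ} (hr : 0 ≤ r) (hS : sphere c r ⊆ S) :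
    closedBall c (Real.sqrt 2 * r) ⊆ S := by
  have h2 : Real.sqrt 2 * Real.sqrt 2 = 2 := Real.mul_self_sqrt (by norm_num)
  have h2pos : (0:ℝ) < Real.sqrt 2 := Real.sqrt_pos.2 (by norm_num)
  intro y hy
  set s : ℝ := r / Real.sqrt 2 with hsdef
  have hs0 : 0 ≤ s := div_nonneg hr h2pos.le
  have h2s : 2 * s = Real.sqrt 2 * r := by
    rw [hsdef]; field_simp; nlinarith
  have hys : ‖y - c‖ ≤ 2 * s := by
    rw [h2s, ← dist_eq_norm]; exact mem_closedBall.1 hy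
  obtain ⟨m, hmc, hmy⟩ := exists_two_sphere_point c y hs0 hys
  obtain ⟨u, hu1, hu0⟩ := exists_unit_orthogonal (m - c)
  have hmu : ⟪m - c, u⟫ = 0 := by rw [real_inner_comm]; exact hu0
  have hss : 2 * s ^ 2 = r ^ 2 := by
    rw [hsdef, div_pow, Real.sq_sqrt (by norm_num : (0:ℝ) ≤ 2)]; ring
  have hv : ∀ ε : ℝ, ε = 1 ∨ ε = -1 → m + (ε * s) • u ∈ sphere c r := by
    intro ε hε
    rw [mem_sphere_iff_norm]
    have e : m + (ε * s) • u - c = (m - c) + (ε * s) • u := by module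
    rw [e]
    apply norm_eq_of_sq_eq hr
    rw [norm_add_sq_real, real_inner_smul_right, hmu]
    simp only [norm_smul, Real.norm_eq_abs, hu1, hmc, mul_pow, sq_abs, mul_one, mul_zero]
    rcases hε with rfl | rfl <;> nlinarith
  have hv₁ : m + s • u ∈ S := hS (by simpa using hv 1 (Or.inl rfl))
  have hv₂ : m + (-s) • u ∈ S := hS (by simpa using hv (-1) (Or.inr rfl))
  have key := hs _ _ hv₁ hv₂
  have ec : (2:ℝ)⁻¹ • ((m + s • u) + (m + (-s) • u)) = m := by module
  have ed : (m + s • u) - (m + (-s) • u) = (2 * s) • u := by module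
  have en : ‖(m + s • u) - (m + (-s) • u)‖ / 2 = s := by
    rw [ed, norm_smul, hu1, mul_one, Real.norm_eq_abs,
      abs_of_nonneg (by linarith : (0:ℝ) ≤ 2 * s)]
    ring
  rw [ec, en] at key
  apply key
  rw [mem_sphere_iff_norm, ← norm_neg]
  simpa using hmy

/-- The (topological) support of a measure on a metric space: the set of points all of whose
balls have positive measure.  This is the smallest closed set of full measure. -/
def measSupport (g : Measure (EuclideanSpace ℝ (Fin 3))) : Set (EuclideanSpace ℝ (Fin 3)) :=
  {x | ∀ r : ℝ, 0 < r → 0 < g (Metric.ball x r)}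

/-- If a probability measure `g` on `ℝ³` is such that whenever `v₁, v₂` are in its support,
the whole sphere of center `(v₁+v₂)/2` and radius `‖v₁-v₂‖/2` is contained in the support,
and `g` is not a Dirac mass, then the support of `g` is all of `ℝ³`. -/
theorem stmt_1 (g : Measure (EuclideanSpace ℝ (Fin 3))) [IsProbabilityMeasure g]
    (hsphere : ∀ v₁ v₂ : EuclideanSpace ℝ (Fin 3), v₁ ∈ measSupport g → v₂ ∈ measSupport g →
      Metric.sphere ((2:ℝ)⁻¹ • (v₁ + v₂)) (‖v₁ - v₂‖ / 2) ⊆ measSupport g)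
    (hnotdirac : ¬ ∃ a : EuclideanSpace ℝ (Fin 3), g = Measure.dirac a) :
    measSupport g = Set.univ := by
  set S := measSupport g with hSdef
  -- complement of support is null
  have hSc : g Sᶜ = 0 := by
    apply measure_null_of_locally_null
    intro x hx
    have hx' : ¬ ∀ r : ℝ, 0 < r → 0 < g (Metric.ball x r) := hx
    push_neg at hx'
    obtain ⟨r, hr, hr0⟩ := hx'
    exact ⟨Metric.ball x r, mem_nhdsWithin_of_mem_nhds (ball_mem_nhds x hr),
      le_antisymm hr0 zero_le⟩
  -- support has positive measure, hence nonempty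
  have hS1 : g S ≠ 0 := by
    intro h0
    have : (1 : ℝ≥0∞) ≤ g S + g Sᶜ := by
      rw [← measure_univ (μ := g)]
      refine le_trans (measure_mono ?_) (measure_union_le S Sᶜ)
      simp
    rw [h0, hSc] at this
    simp at this
  obtain ⟨a, ha⟩ := nonempty_of_measure_ne_zero hS1
  -- a second point in the support
  obtain ⟨b, hb, hba⟩ : ∃ b ∈ S, b ≠ a := by
    by_contra hc
    push_neg at hc
    refine hnotdirac ⟨a, ?_⟩
    have hsub : S ⊆ {a} := fun b hb => hc b hb
    have hca : g ({a}ᶜ) = 0 :=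
      measure_mono_null (Set.compl_subset_compl.2 hsub) hSc
    have ha1 : g {a} = 1 := by
      have := measure_add_measure_compl (μ := g) (measurableSet_singleton a)
      rw [hca, add_zero, measure_univ] at this
      exact this
    refine Measure.ext fun t ht => ?_
    by_cases hat : a ∈ t
    · have h1 : g t ≤ 1 := prob_le_one
      have h2 : (1 : ℝ≥0∞) ≤ g t := by
        rw [← ha1]; exact measure_mono (Set.singleton_subset_iff.2 hat)
      rw [Measure.dirac_apply' a ht, Set.indicator_of_mem hat]
      exact le_antisymm h1 h2
    · have h1 : g t = 0 := measure_mono_null (fun y hy => by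
        simp only [Set.mem_compl_iff, Set.mem_singleton_iff]
        rintro rfl; exact hat hy) hca
      rw [h1, Measure.dirac_apply' a ht, Set.indicator_of_notMem hat]
  -- initial sphere in the support
  set c₀ : EuclideanSpace ℝ (Fin 3) := (2:ℝ)⁻¹ • (b + a) with hc₀
  set r₀ : ℝ := ‖b - a‖ / 2 with hr₀
  have hr₀pos : 0 < r₀ := by
    have : b - a ≠ 0 := sub_ne_zero.2 hba
    have := norm_pos_iff.2 this
    rw [hr₀]; linarith
  have base : Metric.sphere c₀ r₀ ⊆ S := hsphere b a hb ha
  have h2pos : (0:ℝ) < Real.sqrt 2 := Real.sqrt_pos.2 (by norm_num)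
  have h2gt1 : (1:ℝ) < Real.sqrt 2 := by
    nlinarith [Real.sq_sqrt (by norm_num : (0:ℝ) ≤ 2)]
  -- iterate the doubling lemma
  have claim : ∀ n : ℕ, Metric.sphere c₀ ((Real.sqrt 2) ^ n * r₀) ⊆ S := by
    intro n
    induction n with
    | zero => simpa using base
    | succ n ih =>
      have hrn : 0 ≤ (Real.sqrt 2) ^ n * r₀ := by positivity
      have := closedBall_subset_of_sphere_subset S hsphere hrn ih
      refine Set.Subset.trans ?_ this
      rw [pow_succ]
      refine Set.Subset.trans sphere_subset_closedBall ?_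
      apply closedBall_subset_closedBall
      exact le_of_eq (by ring)
  -- conclude
  apply Set.eq_univ_of_forall
  intro x
  obtain ⟨n, hn⟩ := pow_unbounded_of_one_lt (‖x - c₀‖ / r₀) h2gt1
  have hxn : ‖x - c₀‖ ≤ (Real.sqrt 2) ^ n * r₀ := by
    rw [div_lt_iff₀ hr₀pos] at hn
    linarith
  have hrn : 0 ≤ (Real.sqrt 2) ^ n * r₀ := by positivity
  apply closedBall_subset_of_sphere_subset S hsphere hrn (claim n)
  rw [mem_closedBall, dist_eq_norm]
  calc ‖x - c₀‖ ≤ (Real.sqrt 2) ^ n * r₀ := hxn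
    _ ≤ Real.sqrt 2 * ((Real.sqrt 2) ^ n * r₀) := by nlinarith
end

section
/- Let x ∈ ℝ³, r > 0, and let g be a probability measure on ℝ³ whose support contains the sphere S(x,r) and which satisfies: v₁, v₂ ∈ Supp g implies S((v₁+v₂)/2, |v₁−v₂|/2) ⊂ Supp g. Then the closed ball of center x and radius √2·r is contained in the support of g. -/
open MeasureTheory Metric Module RealInnerProductSpace

lemma exists_perp (v : EuclideanSpace ℝ (Fin 3)) (c : ℝ) (hc : 0 ≤ c) :
    ∃ w : EuclideanSpace ℝ (Fin 3), ⟪v, w⟫ = (0:ℝ) ∧ ‖w‖ = c := by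
  have hspan : finrank ℝ (ℝ ∙ v) ≤ 1 := by
    rcases eq_or_ne v 0 with h | h
    · rw [h, Submodule.span_zero_singleton, finrank_bot]; omega
    · rw [finrank_span_singleton h]
  have hsum := Submodule.finrank_add_finrank_orthogonal (𝕜 := ℝ) (ℝ ∙ v)
  rw [finrank_euclideanSpace] at hsum
  have hpos : (ℝ ∙ v)ᗮ ≠ ⊥ := by
    intro hbot
    rw [hbot, finrank_bot] at hsum
    simp at hsum
    omega
  obtain ⟨w₀, hw₀mem, hw₀ne⟩ := Submodule.exists_mem_ne_zero_of_ne_bot hpos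
  have hperp : ⟪v, w₀⟫ = (0:ℝ) := hw₀mem v (Submodule.mem_span_singleton_self v)
  refine ⟨(c / ‖w₀‖) • w₀, ?_, ?_⟩
  · rw [real_inner_smul_right, hperp, mul_zero]
  · rw [norm_smul, Real.norm_eq_abs, abs_of_nonneg (by positivity),
      div_mul_cancel₀ _ (norm_ne_zero_iff.mpr hw₀ne)]

/-- If the support of a probability measure `g` on `ℝ³` contains the sphere `S(x,r)` and is
stable by the operation `v₁, v₂ ∈ Supp g ⟹ S((v₁+v₂)/2, ‖v₁-v₂‖/2) ⊆ Supp g`, then the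
closed ball of center `x` and radius `√2 · r` is contained in the support of `g`. -/
theorem stmt_2 (g : Measure (EuclideanSpace ℝ (Fin 3))) [IsProbabilityMeasure g]
    (x : EuclideanSpace ℝ (Fin 3)) (r : ℝ) (hr : 0 < r)
    (hS : Metric.sphere x r ⊆ measSupport g)
    (hsphere : ∀ v₁ v₂ : EuclideanSpace ℝ (Fin 3), v₁ ∈ measSupport g → v₂ ∈ measSupport g →
      Metric.sphere ((2:ℝ)⁻¹ • (v₁ + v₂)) (‖v₁ - v₂‖ / 2) ⊆ measSupport g) :
    Metric.closedBall x (Real.sqrt 2 * r) ⊆ measSupport g := by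
  intro y hy
  rw [Metric.mem_closedBall] at hy
  have hsqrt2 : (0:ℝ) < Real.sqrt 2 := by positivity
  set s := r / Real.sqrt 2 with hs_def
  have hs : 0 < s := by positivity
  have hsq2 : Real.sqrt 2 ^ 2 = 2 := Real.sq_sqrt (by norm_num)
  have hs2 : s ^ 2 + s ^ 2 = r ^ 2 := by
    rw [hs_def, div_pow, hsq2]; ring
  have h2s : Real.sqrt 2 * r = 2 * s := by
    rw [hs_def]
    field_simp
    nlinarith
  have hd : dist y x ≤ 2 * s := by rwa [h2s] at hy
  have hd0 : (0:ℝ) ≤ dist y x := dist_nonneg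
  have hd2 : (dist y x / 2) ^ 2 ≤ s ^ 2 := by nlinarith
  obtain ⟨w, hw_perp, hw_norm⟩ := exists_perp (y - x)
    (Real.sqrt (s ^ 2 - (dist y x / 2) ^ 2)) (Real.sqrt_nonneg _)
  set m := x + (2:ℝ)⁻¹ • (y - x) + w with hm_def
  have hym : ‖(2:ℝ)⁻¹ • (y - x)‖ = dist y x / 2 := by
    rw [norm_smul, dist_eq_norm, norm_sub_rev]
    simp
    ring
  have hmx2 : ‖m - x‖ ^ 2 = s ^ 2 := by
    have h1 : m - x = (2:ℝ)⁻¹ • (y - x) + w := by rw [hm_def]; abel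
    have h2 : ⟪(2:ℝ)⁻¹ • (y - x), w⟫ = (0:ℝ) := by
      rw [real_inner_smul_left, hw_perp, mul_zero]
    rw [h1, norm_add_sq_real, h2, hym, hw_norm, Real.sq_sqrt (by linarith)]
    ring
  have hmy2 : ‖m - y‖ ^ 2 = s ^ 2 := by
    have h1 : m - y = -((2:ℝ)⁻¹ • (y - x)) + w := by rw [hm_def]; module
    have h2 : ⟪-((2:ℝ)⁻¹ • (y - x)), w⟫ = (0:ℝ) := by
      rw [inner_neg_left, real_inner_smul_left, hw_perp]; ring
    rw [h1, norm_add_sq_real, h2, norm_neg, hym, hw_norm, Real.sq_sqrt (by linarith)]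
    ring
  have hmx : ‖m - x‖ = s := by
    rw [← Real.sqrt_sq (norm_nonneg _), hmx2, Real.sqrt_sq hs.le]
  have hmy : ‖m - y‖ = s := by
    rw [← Real.sqrt_sq (norm_nonneg _), hmy2, Real.sqrt_sq hs.le]
  obtain ⟨u, hu_perp, hu_norm⟩ := exists_perp (m - x) s hs.le
  have hv₁ : m + u ∈ Metric.sphere x r := by
    rw [mem_sphere_iff_norm]
    have h1 : m + u - x = (m - x) + u := by abel
    rw [h1, ← Real.sqrt_sq (norm_nonneg _), norm_add_sq_real, hu_perp, hmx, hu_norm]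
    rw [show s ^ 2 + 2 * 0 + s ^ 2 = r ^ 2 by linarith, Real.sqrt_sq hr.le]
  have hv₂ : m - u ∈ Metric.sphere x r := by
    rw [mem_sphere_iff_norm]
    have h1 : m - u - x = (m - x) + -u := by abel
    have h2 : ⟪m - x, -u⟫ = (0:ℝ) := by rw [inner_neg_right, hu_perp]; ring
    rw [h1, ← Real.sqrt_sq (norm_nonneg _), norm_add_sq_real, h2, hmx, norm_neg, hu_norm]
    rw [show s ^ 2 + 2 * 0 + s ^ 2 = r ^ 2 by linarith, Real.sqrt_sq hr.le]
  have hmid : (2:ℝ)⁻¹ • ((m + u) + (m - u)) = m := by module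
  have hnorm : ‖(m + u) - (m - u)‖ / 2 = s := by
    have h1 : (m + u) - (m - u) = (2:ℝ) • u := by module
    rw [h1, norm_smul, hu_norm]
    simp
  have key := hsphere (m + u) (m - u) (hS hv₁) (hS hv₂)
  rw [hmid, hnorm] at key
  apply key
  rw [mem_sphere_iff_norm, norm_sub_rev, hmy]
end

section
/- For every v in the closed ball of center x ∈ ℝ³ and radius √2·r (r > 0), there exist v₁, v₂ on the sphere S(x,r) such that v lies on the sphere of center (v₁+v₂)/2 and radius |v₁−v₂|/2. Explicitly, writing v = x + α·r·σ with σ a unit vector and α ∈ [0,√2], and choosing any unit vector τ orthogonal to σ, one may take v₁ = x + r·[(α+√(2−α²))σ + (α−√(2−α²))τ]/2 and v₂ = x + r·[(α+√(2−α²))σ − (α−√(2−α²))τ]/2. -/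
open Metric RealInnerProductSpace

lemma exists_ortho_unit (σ : EuclideanSpace ℝ (Fin 3)) (hσ : σ ≠ 0) :
    ∃ τ : EuclideanSpace ℝ (Fin 3), ‖τ‖ = 1 ∧ ⟪σ, τ⟫ = 0 := by
  haveI : Fact (Module.finrank ℝ (EuclideanSpace ℝ (Fin 3)) = 2 + 1) :=
    ⟨by simp [finrank_euclideanSpace]⟩
  have h2 : Module.finrank ℝ (ℝ ∙ σ)ᗮ = 2 := Submodule.finrank_orthogonal_span_singleton hσ
  have hne : (ℝ ∙ σ)ᗮ ≠ ⊥ := by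
    intro h
    rw [h] at h2
    simp at h2
  obtain ⟨w, hw, hw0⟩ := Submodule.exists_mem_ne_zero_of_ne_bot hne
  refine ⟨‖w‖⁻¹ • w, ?_, ?_⟩
  · rw [norm_smul, norm_inv, norm_norm, inv_mul_cancel₀ (norm_ne_zero_iff.mpr hw0)]
  · have : ⟪σ, w⟫ = 0 := by
      exact hw σ (Submodule.mem_span_singleton_self σ)
    rw [real_inner_smul_right, this, mul_zero]

/-- For every `v` in the closed ball of center `x ∈ ℝ³` and radius `√2 · r` (`r > 0`), there
exist `v₁, v₂` on the sphere `S(x,r)` such that `v` lies on the sphere of center `(v₁+v₂)/2`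
and radius `‖v₁-v₂‖/2`.  Explicitly, writing `v = x + α·r·σ` with `σ` a unit vector and
`α ∈ [0,√2]`, and choosing a unit vector `τ` orthogonal to `σ`, one may take
`v₁ = x + r·[(α+√(2-α²))σ + (α−√(2-α²))τ]/2` and `v₂ = x + r·[(α+√(2-α²))σ − (α−√(2-α²))τ]/2`. -/
theorem stmt_3 (x v : EuclideanSpace ℝ (Fin 3)) (r : ℝ) (hr : 0 < r)
    (hv : ‖v - x‖ ≤ Real.sqrt 2 * r) :
    ∃ (σ τ : EuclideanSpace ℝ (Fin 3)) (α : ℝ),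
      ‖σ‖ = 1 ∧ ‖τ‖ = 1 ∧ ⟪σ, τ⟫ = 0 ∧ 0 ≤ α ∧ α ≤ Real.sqrt 2 ∧ v = x + (α * r) • σ ∧
      (let β := Real.sqrt (2 - α ^ 2)
       let v₁ := x + (r / 2) • ((α + β) • σ + (α - β) • τ)
       let v₂ := x + (r / 2) • ((α + β) • σ - (α - β) • τ)
       ‖v₁ - x‖ = r ∧ ‖v₂ - x‖ = r ∧ ‖v - (2:ℝ)⁻¹ • (v₁ + v₂)‖ = ‖v₁ - v₂‖ / 2) := by
  -- choose σ and α
  obtain ⟨σ, hσ, hvσ⟩ : ∃ σ : EuclideanSpace ℝ (Fin 3), ‖σ‖ = 1 ∧ v - x = ‖v - x‖ • σ := by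
    by_cases hvx : v = x
    · refine ⟨EuclideanSpace.single 0 1, by simp, by simp [hvx]⟩
    · refine ⟨‖v - x‖⁻¹ • (v - x), ?_, ?_⟩
      · rw [norm_smul, norm_inv, norm_norm,
          inv_mul_cancel₀ (norm_ne_zero_iff.mpr (sub_ne_zero.mpr hvx))]
      · rw [smul_smul, mul_inv_cancel₀ (norm_ne_zero_iff.mpr (sub_ne_zero.mpr hvx)), one_smul]
  obtain ⟨τ, hτ, hστ⟩ := exists_ortho_unit σ (by intro h; rw [h] at hσ; simp at hσ)
  set α : ℝ := ‖v - x‖ / r with hα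
  have hαr : α * r = ‖v - x‖ := div_mul_cancel₀ _ hr.ne'
  have hα0 : 0 ≤ α := div_nonneg (norm_nonneg _) hr.le
  have hα2 : α ≤ Real.sqrt 2 := by
    rw [hα, div_le_iff₀ hr]; exact hv
  have hαsq : α ^ 2 ≤ 2 := by
    have := mul_self_le_mul_self hα0 hα2
    rwa [Real.mul_self_sqrt (by norm_num), ← pow_two] at this
  set β : ℝ := Real.sqrt (2 - α ^ 2) with hβ
  have hβsq : β ^ 2 = 2 - α ^ 2 := Real.sq_sqrt (by linarith)
  have hveq : v = x + (α * r) • σ := by rw [hαr, ← hvσ]; abel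
  refine ⟨σ, τ, α, hσ, hτ, hστ, hα0, hα2, hveq, ?_, ?_, ?_⟩
  -- key norm computation
  all_goals
    have key : ∀ a b : ℝ, ‖a • σ + b • τ‖ = Real.sqrt (a ^ 2 + b ^ 2) := by
      intro a b
      rw [norm_eq_sqrt_real_inner]
      congr 1
      rw [real_inner_add_add_self, real_inner_smul_left, real_inner_smul_right,
        real_inner_smul_left, real_inner_smul_right, real_inner_smul_left,
        real_inner_smul_right, hστ, real_inner_self_eq_norm_sq, real_inner_self_eq_norm_sq,
        hσ, hτ]
      ring
  · -- ‖v₁ - x‖ = r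
    have : x + (r / 2) • ((α + β) • σ + (α - β) • τ) - x
        = ((r / 2) * (α + β)) • σ + ((r / 2) * (α - β)) • τ := by module
    rw [this, key, show ((r/2)*(α+β))^2 + ((r/2)*(α-β))^2 = (r/2)^2 * ((α+β)^2+(α-β)^2) by ring,
      show (α+β)^2 + (α-β)^2 = 2*α^2 + 2*β^2 by ring, hβsq]
    rw [show (r/2)^2 * (2*α^2 + 2*(2-α^2)) = r^2 by ring, Real.sqrt_sq hr.le]
  · -- ‖v₂ - x‖ = r
    have : x + (r / 2) • ((α + β) • σ - (α - β) • τ) - x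
        = ((r / 2) * (α + β)) • σ + (-((r / 2) * (α - β))) • τ := by module
    rw [this, key, show ((r/2)*(α+β))^2 + (-((r/2)*(α-β)))^2 = (r/2)^2 * ((α+β)^2+(α-β)^2) by
      ring, show (α+β)^2 + (α-β)^2 = 2*α^2 + 2*β^2 by ring, hβsq]
    rw [show (r/2)^2 * (2*α^2 + 2*(2-α^2)) = r^2 by ring, Real.sqrt_sq hr.le]
  · -- midpoint
    have h1 : v - (2:ℝ)⁻¹ • ((x + (r / 2) • ((α + β) • σ + (α - β) • τ))
        + (x + (r / 2) • ((α + β) • σ - (α - β) • τ))) = ((r / 2) * (α - β)) • σ := by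
      rw [hveq]; module
    have h2 : (x + (r / 2) • ((α + β) • σ + (α - β) • τ))
        - (x + (r / 2) • ((α + β) • σ - (α - β) • τ)) = (r * (α - β)) • τ := by module
    rw [h1, h2, norm_smul, norm_smul, hσ, hτ]
    simp [Real.norm_eq_abs, abs_mul, abs_of_pos hr]
    ring
end

section
/- Define, for w, ζ ∈ ℝ³, the set K(w,ζ) = {v ∈ ℝ³ : |v| ≤ 3, |v−w| ≥ 1, |⟨v−w, ζ⟩| ≥ |ζ|}. Then for every w ∈ ℝ³ and ζ ∈ ℝ³ there exists a point x on the sphere S(0,2) = {y : |y| = 2} such that the open ball B(x,1) of radius 1 centered at x is contained in K(w,ζ). -/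
open Metric RealInnerProductSpace

/-- The set `K(w,ζ) = {v ∈ ℝ³ : |v| ≤ 3, |v−w| ≥ 1, |⟨v−w, ζ⟩| ≥ |ζ|}`. -/
def Kset (w ζ : EuclideanSpace ℝ (Fin 3)) : Set (EuclideanSpace ℝ (Fin 3)) :=
  {v | ‖v‖ ≤ 3 ∧ 1 ≤ ‖v - w‖ ∧ ‖ζ‖ ≤ |⟪v - w, ζ⟫|}

/-- For every `w, ζ ∈ ℝ³` there is a point `x` on the sphere of center `0` and radius `2`
such that the open ball `B(x,1)` is contained in `K(w,ζ)`. -/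
theorem stmt_4 (w ζ : EuclideanSpace ℝ (Fin 3)) :
    ∃ x : EuclideanSpace ℝ (Fin 3), ‖x‖ = 2 ∧ Metric.ball x 1 ⊆ Kset w ζ := by
  by_cases hζ : ζ = 0
  · subst hζ
    -- inner product condition is trivial; need ‖x-w‖ ≥ 2
    have key : ∀ x : EuclideanSpace ℝ (Fin 3), ‖x‖ = 2 → 2 ≤ ‖x - w‖ →
        Metric.ball x 1 ⊆ Kset w 0 := by
      intro x hx hxw v hv
      rw [Metric.mem_ball, dist_eq_norm] at hv
      refine ⟨?_, ?_, ?_⟩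
      · calc ‖v‖ = ‖(v - x) + x‖ := by congr 1; abel
        _ ≤ ‖v - x‖ + ‖x‖ := norm_add_le _ _
        _ ≤ 1 + 2 := by rw [hx]; linarith
        _ = 3 := by norm_num
      · have : ‖x - w‖ ≤ ‖x - v‖ + ‖v - w‖ := norm_sub_le_norm_sub_add_norm_sub _ _ _
        have hxv : ‖x - v‖ < 1 := by rwa [norm_sub_rev]
        linarith
      · simp
    by_cases hw : w = 0
    · subst hw
      refine ⟨EuclideanSpace.single 0 (2:ℝ), ?_, key _ ?_ ?_⟩ <;>
        simp [EuclideanSpace.norm_single]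
    · have hwpos : 0 < ‖w‖ := norm_pos_iff.mpr hw
      have hnx : ‖(-(2/‖w‖)) • w‖ = 2 := by
        rw [norm_smul, norm_neg, Real.norm_eq_abs, abs_div]
        rw [abs_of_nonneg (by norm_num : (0:ℝ) ≤ 2), abs_of_nonneg (norm_nonneg w)]
        field_simp
      refine ⟨(-(2/‖w‖)) • w, hnx, key _ hnx ?_⟩
      have h1 : (-(2/‖w‖)) • w - w = (-(2/‖w‖) - 1) • w := by
        rw [sub_smul, one_smul]
      rw [h1, norm_smul, Real.norm_eq_abs]
      have h0 : (0:ℝ) ≤ 2/‖w‖ := by positivity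
      have habs : |(-(2/‖w‖) - 1)| = 2/‖w‖ + 1 := by
        rw [abs_of_nonpos (by linarith)]; ring
      rw [habs]
      have h2 : (2/‖w‖ + 1) * ‖w‖ = 2 + ‖w‖ := by field_simp
      rw [h2]; linarith
  · have hζpos : 0 < ‖ζ‖ := norm_pos_iff.mpr hζ
    set s : ℝ := if 0 ≤ ⟪w, ζ⟫ then 1 else -1 with hs
    have hs2 : s * s = 1 := by rw [hs]; split <;> norm_num
    have hsabs : |s| = 1 := by rw [hs]; split <;> norm_num
    have hsw : s * ⟪w, ζ⟫ = |⟪w, ζ⟫| := by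
      rw [hs]; split
      · rw [one_mul, abs_of_nonneg (by assumption)]
      · rw [abs_of_neg (by linarith [lt_of_not_ge (by assumption)])]; ring
    refine ⟨(-2*s/‖ζ‖) • ζ, ?_, ?_⟩
    · rw [norm_smul, Real.norm_eq_abs, abs_div, abs_mul]
      rw [abs_of_nonneg (norm_nonneg ζ), hsabs]
      field_simp
      norm_num
    · intro v hv
      set x : EuclideanSpace ℝ (Fin 3) := (-2*s/‖ζ‖) • ζ with hxdef
      rw [Metric.mem_ball, dist_eq_norm] at hv
      have hxnorm : ‖x‖ = 2 := by
        rw [hxdef, norm_smul, Real.norm_eq_abs, abs_div, abs_mul]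
        rw [abs_of_nonneg (norm_nonneg ζ), hsabs]
        field_simp
        norm_num
      have hxinner : ⟪x, ζ⟫ = -2 * s * ‖ζ‖ := by
        rw [hxdef, real_inner_smul_left, real_inner_self_eq_norm_sq]
        field_simp
      have hcs : |⟪v - x, ζ⟫| ≤ ‖ζ‖ := by
        calc |⟪v - x, ζ⟫| ≤ ‖v - x‖ * ‖ζ‖ := abs_real_inner_le_norm _ _
        _ ≤ 1 * ‖ζ‖ := by apply mul_le_mul_of_nonneg_right (le_of_lt hv) (norm_nonneg ζ)
        _ = ‖ζ‖ := one_mul _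
      have hsplit : ⟪v - w, ζ⟫ = ⟪x, ζ⟫ + ⟪v - x, ζ⟫ - ⟪w, ζ⟫ := by
        rw [← inner_add_left, ← inner_sub_left]
        congr 1
        abel
      have hkey : s * ⟪v - w, ζ⟫ ≤ -‖ζ‖ := by
        rw [hsplit, hxinner]
        have h1 : s * ⟪v - x, ζ⟫ ≤ ‖ζ‖ := by
          calc s * ⟪v - x, ζ⟫ ≤ |s * ⟪v - x, ζ⟫| := le_abs_self _
          _ = |s| * |⟪v - x, ζ⟫| := abs_mul _ _
          _ = |⟪v - x, ζ⟫| := by rw [hsabs, one_mul]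
          _ ≤ ‖ζ‖ := hcs
        have h2 : s * (-2 * s * ‖ζ‖) = -2 * ‖ζ‖ := by nlinarith [hs2]
        have habs : 0 ≤ |⟪w, ζ⟫| := abs_nonneg _
        nlinarith [hsw]
      have hinnerabs : ‖ζ‖ ≤ |⟪v - w, ζ⟫| := by
        have : |s * ⟪v - w, ζ⟫| = |⟪v - w, ζ⟫| := by rw [abs_mul, hsabs, one_mul]
        rw [← this, abs_of_nonpos (by linarith)]
        linarith
      refine ⟨?_, ?_, hinnerabs⟩
      · calc ‖v‖ = ‖(v - x) + x‖ := by congr 1; abel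
        _ ≤ ‖v - x‖ + ‖x‖ := norm_add_le _ _
        _ ≤ 1 + 2 := by rw [hxnorm]; linarith
        _ = 3 := by norm_num
      · have hcs2 : |⟪v - w, ζ⟫| ≤ ‖v - w‖ * ‖ζ‖ := abs_real_inner_le_norm _ _
        have : ‖ζ‖ ≤ ‖v - w‖ * ‖ζ‖ := le_trans hinnerabs hcs2
        nlinarith [norm_nonneg (v - w)]
end

section
/- Let g ∈ C¹(ℝ^d) be a nonnegative integrable function with ∫|∇g| < ∞, satisfying: there are 0 < α < a < 1 and κ such that for all r ∈ (0,1] and |h| ≤ 1, ∫|g⋆χ_r(x+h) − g⋆χ_r(x)| dx ≤ C_d κ |h|^a r^{−α}, where χ_r = (v_d r^d)^{-1} 1_{B(0,r)}. Then sup_{0<|h|≤1} |h|^{α−a} ∫ |g(x+h) − g(x)| dx ≤ C_{d,a,α} κ. -/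
open MeasureTheory Metric

/-- `χ_r`, the normalized indicator of the open ball of radius `r` in `ℝ^d`. -/
noncomputable def chiBall (d : ℕ) (r : ℝ) (x : EuclideanSpace ℝ (Fin d)) : ℝ :=
  if ‖x‖ < r then ((volume (Metric.ball (0 : EuclideanSpace ℝ (Fin d)) 1)).toReal * r ^ d)⁻¹
  else 0

section helpers

variable {d : ℕ}

local notation "𝔼" => EuclideanSpace ℝ (Fin d)

lemma chiBall_eq (r : ℝ) :
    chiBall d r = (Metric.ball (0 : 𝔼) r).indicator
      (fun _ => ((volume (Metric.ball (0 : 𝔼) 1)).toReal * r ^ d)⁻¹) := by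
  funext x
  classical
  rw [Set.indicator_apply]
  simp only [mem_ball, dist_zero_right, chiBall]

lemma chiBall_nonneg {r : ℝ} (hr : 0 < r) (x : 𝔼) : 0 ≤ chiBall d r x := by
  unfold chiBall
  split
  · positivity
  · exact le_refl _

lemma chiBall_le {r : ℝ} (x : 𝔼) :
    chiBall d r x ≤ ((volume (Metric.ball (0 : 𝔼) 1)).toReal * r ^ d)⁻¹ ∨ chiBall d r x = 0 := by
  unfold chiBall
  split
  · exact Or.inl le_rfl
  · exact Or.inr rfl

lemma chiBall_measurable (r : ℝ) : Measurable (chiBall d r) := by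
  rw [chiBall_eq]
  exact (measurable_const.indicator measurableSet_ball)

lemma chiBall_integrable {r : ℝ} : Integrable (chiBall d r) := by
  rw [chiBall_eq]
  rw [integrable_indicator_iff measurableSet_ball]
  exact integrableOn_const measure_ball_lt_top.ne

lemma volume_unit_ball_pos (hd : 0 < d) :
    0 < (volume (Metric.ball (0 : 𝔼) 1)).toReal := by
  refine ENNReal.toReal_pos (measure_ball_pos _ _ one_pos).ne' measure_ball_lt_top.ne

lemma integral_chiBall (hd : 0 < d) {r : ℝ} (hr : 0 < r) :
    ∫ x : 𝔼, chiBall d r x = 1 := by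
  haveI : Nontrivial 𝔼 := by
    refine nontrivial_of_ne (EuclideanSpace.single (⟨0, hd⟩ : Fin d) (1 : ℝ)) 0 ?_
    intro H
    have := congrArg (fun v : 𝔼 => ‖v‖) H
    simp [EuclideanSpace.norm_single] at this
  rw [chiBall_eq, integral_indicator measurableSet_ball, setIntegral_const]
  rw [measureReal_def, Measure.addHaar_ball volume 0 hr.le, finrank_euclideanSpace_fin]
  have h1 : 0 < (volume (Metric.ball (0 : 𝔼) 1)).toReal := volume_unit_ball_pos hd
  rw [ENNReal.toReal_mul, ENNReal.toReal_ofReal (by positivity)]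
  rw [smul_eq_mul]
  field_simp

end helpers

section approx
variable {d : ℕ}
local notation "𝔼" => EuclideanSpace ℝ (Fin d)

lemma approx_bound (hd : 0 < d) (g : 𝔼 → ℝ) (hgc : Continuous g) (hgi : Integrable g)
    {r : ℝ} (hr : 0 < r) {B : ℝ} (hB : 0 ≤ B)
    (hω : ∀ y : 𝔼, ‖y‖ < r → ∫ x, |g (x - y) - g x| ≤ B) :
    Integrable (fun x => (∫ z, g z * chiBall d r (x - z)) - g x) ∧
    ∫ x, |(∫ z, g z * chiBall d r (x - z)) - g x| ≤ B := by
  classical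
  have hχm := chiBall_measurable (d := d) r
  have hχnn : ∀ x : 𝔼, 0 ≤ chiBall d r x := chiBall_nonneg hr
  set c : ℝ := ((volume (Metric.ball (0 : 𝔼) 1)).toReal * r ^ d)⁻¹ with hc
  have hcnn : 0 ≤ c := by
    have := volume_unit_ball_pos (d := d) hd
    positivity
  have hχle : ∀ x : 𝔼, chiBall d r x ≤ c := by
    intro x
    rcases chiBall_le (r := r) x with h | h
    · exact h
    · rw [h]; exact hcnn
  have hχ1 : ∫ y : 𝔼, chiBall d r y = 1 := integral_chiBall hd hr
  have hχsupp : ∀ y : 𝔼, chiBall d r y ≠ 0 → ‖y‖ < r := by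
    intro y hy
    by_contra hnot
    exact hy (by simp [chiBall, hnot])
  have hχi : Integrable (chiBall d r) := chiBall_integrable
  have hconv : ∀ x : 𝔼, (∫ z, g z * chiBall d r (x - z)) = ∫ y, g (x - y) * chiBall d r y := by
    intro x
    have := integral_sub_left_eq_self (fun y => g (x - y) * chiBall d r y) volume x
    simpa using this
  have hgshift : ∀ y : 𝔼, Integrable (fun x : 𝔼 => g (x - y)) := fun y => hgi.comp_sub_right y
  have htransl : ∀ x : 𝔼, Integrable (fun y : 𝔼 => g (x - y)) := fun x => hgi.comp_sub_left x
  have hgx_int : ∀ x : 𝔼, Integrable (fun y => g (x - y) * chiBall d r y) := by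
    intro x
    refine (((htransl x).bdd_mul (c := c) hχm.aestronglyMeasurable
      (Filter.Eventually.of_forall fun y => ?_)).congr (Filter.Eventually.of_forall fun y => mul_comm _ _))
    rw [Real.norm_eq_abs, abs_of_nonneg (hχnn y)]
    exact hχle y
  have hdiff : ∀ x : 𝔼, (∫ z, g z * chiBall d r (x - z)) - g x
      = ∫ y, (g (x - y) - g x) * chiBall d r y := by
    intro x
    have h2 : Integrable (fun y : 𝔼 => g x * chiBall d r y) := hχi.const_mul _
    have key : ∫ y, (g (x - y) - g x) * chiBall d r y
        = (∫ y, g (x - y) * chiBall d r y) - ∫ y, g x * chiBall d r y := by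
      rw [← integral_sub (hgx_int x) h2]
      congr 1; funext y; ring
    rw [hconv x, key, integral_const_mul, hχ1, mul_one]
  have hGm : AEStronglyMeasurable (fun p : 𝔼 × 𝔼 => (g (p.2 - p.1) - g p.2) * chiBall d r p.1)
      ((volume : Measure 𝔼).prod volume) := by
    refine Measurable.aestronglyMeasurable ?_
    exact (((hgc.measurable.comp (measurable_snd.sub measurable_fst)).sub
      (hgc.measurable.comp measurable_snd)).mul (hχm.comp measurable_fst))
  have hnormint : ∀ y : 𝔼, (∫ x : 𝔼, ‖(g (x - y) - g x) * chiBall d r y‖)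
      = (∫ x : 𝔼, |g (x - y) - g x|) * chiBall d r y := by
    intro y
    rw [← integral_mul_const]
    congr 1; funext x
    rw [Real.norm_eq_abs, abs_mul, abs_of_nonneg (hχnn y)]
  have hinner : ∀ y : 𝔼, Integrable (fun x : 𝔼 => (g (x - y) - g x) * chiBall d r y) :=
    fun y => ((hgshift y).sub hgi).mul_const _
  have hGint : Integrable (fun p : 𝔼 × 𝔼 => (g (p.2 - p.1) - g p.2) * chiBall d r p.1)
      ((volume : Measure 𝔼).prod volume) := by
    rw [integrable_prod_iff hGm]
    refine ⟨Filter.Eventually.of_forall fun y => hinner y, ?_⟩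
    have hbound : ∀ y : 𝔼, ‖∫ x : 𝔼, ‖(g (x - y) - g x) * chiBall d r y‖‖
        ≤ ‖B * chiBall d r y‖ := by
      intro y
      rw [hnormint y, Real.norm_eq_abs, Real.norm_eq_abs]
      rcases eq_or_ne (chiBall d r y) 0 with h0 | h0
      · simp [h0]
      · have hyr := hχsupp y h0
        rw [abs_of_nonneg (mul_nonneg (integral_nonneg fun x => abs_nonneg _) (hχnn y)),
          abs_of_nonneg (mul_nonneg hB (hχnn y))]
        exact mul_le_mul_of_nonneg_right (hω y hyr) (hχnn y)
    exact Integrable.mono (hχi.const_mul B) hGm.norm.integral_prod_right'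
      (Filter.Eventually.of_forall hbound)
  have hswap : Integrable (fun p : 𝔼 × 𝔼 => (g (p.1 - p.2) - g p.1) * chiBall d r p.2)
      ((volume : Measure 𝔼).prod volume) := hGint.swap
  have hid : Integrable (fun x : 𝔼 => (∫ z, g z * chiBall d r (x - z)) - g x) := by
    have h := hswap.integral_prod_left
    exact h.congr (Filter.Eventually.of_forall fun x => (hdiff x).symm)
  refine ⟨hid, ?_⟩
  have h2nd : Integrable (fun y : 𝔼 => ∫ x : 𝔼, ‖(g (x - y) - g x) * chiBall d r y‖) :=
    ((integrable_prod_iff hGm).1 hGint).2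
  calc ∫ x, |(∫ z, g z * chiBall d r (x - z)) - g x|
      = ∫ x, |∫ y, (g (x - y) - g x) * chiBall d r y| := by
        congr 1; funext x; rw [hdiff x]
    _ ≤ ∫ x : 𝔼, ∫ y : 𝔼, ‖(g (x - y) - g x) * chiBall d r y‖ := by
        refine integral_mono_of_nonneg (Filter.Eventually.of_forall fun x => abs_nonneg _)
          hswap.norm.integral_prod_left (Filter.Eventually.of_forall fun x => ?_)
        simpa [Real.norm_eq_abs] using
          norm_integral_le_integral_norm (fun y : 𝔼 => (g (x - y) - g x) * chiBall d r y)
    _ = ∫ y : 𝔼, ∫ x : 𝔼, ‖(g (x - y) - g x) * chiBall d r y‖ :=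
        integral_integral_swap hswap.norm
    _ ≤ ∫ y : 𝔼, B * chiBall d r y := by
        refine integral_mono h2nd (hχi.const_mul B) fun y => ?_
        rw [hnormint y]
        rcases eq_or_ne (chiBall d r y) 0 with h0 | h0
        · simp [h0]
        · exact mul_le_mul_of_nonneg_right (hω y (hχsupp y h0)) (hχnn y)
    _ = B := by rw [integral_const_mul, hχ1, mul_one]

end approx

section lip
variable {d : ℕ}
local notation "𝔼" => EuclideanSpace ℝ (Fin d)
lemma lip_bound (g : 𝔼 → ℝ) (hg : ContDiff ℝ 1 g) (hgi : Integrable g)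
    (hDg : Integrable (fun x => ‖fderiv ℝ g x‖)) (h : 𝔼) :
    ∫ x, |g (x + h) - g x| ≤ ‖h‖ * ∫ x, ‖fderiv ℝ g x‖ := by
  set L := ∫ x : 𝔼, ‖fderiv ℝ g x‖ with hL
  have hDc : Continuous (fderiv ℝ g) := hg.continuous_fderiv one_ne_zero
  -- pointwise bound
  have key : ∀ x : 𝔼, |g (x + h) - g x|
      ≤ ∫ t in Set.Ioc (0:ℝ) 1, ‖fderiv ℝ g (x + t • h)‖ * ‖h‖ := by
    intro x
    have hderiv : ∀ t ∈ Set.uIcc (0:ℝ) 1,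
        HasDerivAt (fun t : ℝ => g (x + t • h)) ((fderiv ℝ g (x + t • h)) h) t := by
      intro t _
      have h1 : HasDerivAt (fun t : ℝ => x + t • h) h t := by
        simpa using ((hasDerivAt_id t).smul_const h).const_add x
      exact ((hg.differentiable one_ne_zero (x + t • h)).hasFDerivAt).comp_hasDerivAt t h1
    have hcont : Continuous fun t : ℝ => (fderiv ℝ g (x + t • h)) h := by
      have : Continuous fun t : ℝ => fderiv ℝ g (x + t • h) :=
        hDc.comp (continuous_const.add (continuous_id.smul continuous_const))
      exact this.clm_apply continuous_const
    have hint : IntervalIntegrable (fun t : ℝ => (fderiv ℝ g (x + t • h)) h) volume 0 1 :=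
      hcont.intervalIntegrable 0 1
    have heq : g (x + h) - g x = ∫ t in (0:ℝ)..1, (fderiv ℝ g (x + t • h)) h := by
      rw [intervalIntegral.integral_eq_sub_of_hasDerivAt hderiv hint]
      norm_num
    calc |g (x + h) - g x| = ‖∫ t in Set.Ioc (0:ℝ) 1, (fderiv ℝ g (x + t • h)) h‖ := by
          rw [heq, intervalIntegral.integral_of_le zero_le_one, Real.norm_eq_abs]
      _ ≤ ∫ t in Set.Ioc (0:ℝ) 1, ‖(fderiv ℝ g (x + t • h)) h‖ :=
          norm_integral_le_integral_norm _
      _ ≤ ∫ t in Set.Ioc (0:ℝ) 1, ‖fderiv ℝ g (x + t • h)‖ * ‖h‖ := by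
          refine integral_mono_of_nonneg (Filter.Eventually.of_forall fun t => norm_nonneg _)
            ?_ (Filter.Eventually.of_forall fun t => (fderiv ℝ g (x + t • h)).le_opNorm h)
          exact ((hDc.comp (continuous_const.add
            (continuous_id.smul continuous_const))).norm.mul continuous_const).integrableOn_Ioc
  -- Fubini
  set ν := volume.restrict (Set.Ioc (0:ℝ) 1) with hν
  have hconst : ∀ t : ℝ, ∫ x : 𝔼, ‖fderiv ℝ g (x + t • h)‖ * ‖h‖ = L * ‖h‖ := by
    intro t
    rw [integral_mul_const]
    rw [integral_add_right_eq_self (fun x : 𝔼 => ‖fderiv ℝ g x‖) (t • h)]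
  have hmeas : AEStronglyMeasurable (fun p : ℝ × 𝔼 => ‖fderiv ℝ g (p.2 + p.1 • h)‖ * ‖h‖)
      (ν.prod volume) := by
    refine Continuous.aestronglyMeasurable ?_
    exact ((hDc.comp (continuous_snd.add (continuous_fst.smul continuous_const))).norm).mul
      continuous_const
  have hprod : Integrable (fun p : ℝ × 𝔼 => ‖fderiv ℝ g (p.2 + p.1 • h)‖ * ‖h‖)
      (ν.prod volume) := by
    rw [integrable_prod_iff hmeas]
    constructor
    · refine Filter.Eventually.of_forall fun t => ?_
      exact ((hDg.comp_add_right (t • h)).mul_const ‖h‖)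
    · have : (fun t : ℝ => ∫ x : 𝔼, ‖‖fderiv ℝ g (x + t • h)‖ * ‖h‖‖) = fun _ : ℝ => L * ‖h‖ := by
        funext t
        rw [← hconst t]
        congr 1
        funext x
        rw [Real.norm_eq_abs, abs_of_nonneg (by positivity)]
      rw [this, hν]
      exact integrableOn_const (by simp [Real.volume_Ioc])
  have hswap : Integrable (fun p : 𝔼 × ℝ => ‖fderiv ℝ g (p.1 + p.2 • h)‖ * ‖h‖)
      (volume.prod ν) := hprod.swap
  calc ∫ x, |g (x + h) - g x|
      ≤ ∫ x : 𝔼, ∫ t in Set.Ioc (0:ℝ) 1, ‖fderiv ℝ g (x + t • h)‖ * ‖h‖ := by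
        refine integral_mono_of_nonneg (Filter.Eventually.of_forall fun x => abs_nonneg _)
          ?_ (Filter.Eventually.of_forall key)
        exact hswap.integral_prod_left
    _ = ∫ t in Set.Ioc (0:ℝ) 1, ∫ x : 𝔼, ‖fderiv ℝ g (x + t • h)‖ * ‖h‖ :=
        integral_integral_swap hswap
    _ = ∫ _t in Set.Ioc (0:ℝ) 1, L * ‖h‖ := by
        refine setIntegral_congr_fun measurableSet_Ioc fun t _ => hconst t
    _ = ‖h‖ * L := by
        rw [setIntegral_const, measureReal_def, Real.volume_Ioc]
        norm_num [mul_comm]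
end lip

/-- Let `g ∈ C¹(ℝ^d)` be nonnegative and integrable with integrable gradient, and suppose
`∫ |g⋆χ_r(x+h) − g⋆χ_r(x)| dx ≤ κ |h|^a r^{−α}` for all `r ∈ (0,1]` and `|h| ≤ 1`,
where `0 < α < a < 1`.  Then `sup_{0<|h|≤1} |h|^{α−a} ∫ |g(x+h) − g(x)| dx ≤ C_{d,a,α} κ`. -/
theorem stmt_9 (d : ℕ) (α a : ℝ) (hα : 0 < α) (hαa : α < a) (ha : a < 1) :
    ∃ C : ℝ, 0 < C ∧
      ∀ (g : EuclideanSpace ℝ (Fin d) → ℝ) (κ : ℝ), 0 ≤ κ →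
        ContDiff ℝ 1 g → (∀ x, 0 ≤ g x) → Integrable g →
        Integrable (fun x => ‖fderiv ℝ g x‖) →
        (∀ (r : ℝ), 0 < r → r ≤ 1 → ∀ h : EuclideanSpace ℝ (Fin d), ‖h‖ ≤ 1 →
          ∫ x : EuclideanSpace ℝ (Fin d),
              |(∫ z, g z * chiBall d r (x + h - z)) - ∫ z, g z * chiBall d r (x - z)|
            ≤ κ * ‖h‖ ^ a * r ^ (-α)) →
        ∀ h : EuclideanSpace ℝ (Fin d), 0 < ‖h‖ → ‖h‖ ≤ 1 →
          ‖h‖ ^ (α - a) * ∫ x, |g (x + h) - g x| ≤ C * κ := by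
  rcases Nat.eq_zero_or_pos d with hd0 | hd
  · subst hd0
    refine ⟨1, one_pos, ?_⟩
    intro g κ hκ hg hg0 hgi hDg hyp h hpos hle
    exfalso
    have hh : ‖h‖ = 0 := by simp [EuclideanSpace.norm_eq]
    rw [hh] at hpos
    exact lt_irrefl 0 hpos
  · have haα : 0 < a - α := sub_pos.2 hαa
    set c : ℝ := (4 : ℝ) ^ (-(a - α)⁻¹) with hcdef
    have hcpos : 0 < c := Real.rpow_pos_of_pos (by norm_num) _
    have hclt1 : c < 1 := by
      refine Real.rpow_lt_one_of_one_lt_of_neg (by norm_num) ?_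
      simp only [neg_neg, Left.neg_neg_iff]
      positivity
    have hcpow : c ^ (a - α) = 4⁻¹ := by
      rw [hcdef, ← Real.rpow_mul (by norm_num : (0:ℝ) ≤ 4),
        show -(a - α)⁻¹ * (a - α) = -1 by field_simp, Real.rpow_neg_one]
    refine ⟨2 * c ^ (-α), by positivity, ?_⟩
    intro g κ hκ hg hg0 hgi hDg hyp h hpos hle
    have hL0 : 0 ≤ ∫ x : (EuclideanSpace ℝ (Fin d)), ‖fderiv ℝ g x‖ := integral_nonneg fun x => norm_nonneg _
    have hω0 : ∀ v : (EuclideanSpace ℝ (Fin d)), 0 ≤ ∫ x, |g (x + v) - g x| :=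
      fun v => integral_nonneg fun x => abs_nonneg _
    set S : Set ℝ :=
      {p | ∃ v : (EuclideanSpace ℝ (Fin d)), 0 < ‖v‖ ∧ ‖v‖ ≤ 1 ∧ p = ‖v‖ ^ (α - a) * ∫ x, |g (x + v) - g x|} with hSdef
    have hSb : BddAbove S := by
      refine ⟨∫ x : (EuclideanSpace ℝ (Fin d)), ‖fderiv ℝ g x‖, fun p hp => ?_⟩
      obtain ⟨v, hv0, hv1, rfl⟩ := hp
      calc ‖v‖ ^ (α - a) * ∫ x, |g (x + v) - g x|
          ≤ ‖v‖ ^ (α - a) * (‖v‖ * ∫ x : (EuclideanSpace ℝ (Fin d)), ‖fderiv ℝ g x‖) :=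
            mul_le_mul_of_nonneg_left (lip_bound g hg hgi hDg v)
              (Real.rpow_nonneg (norm_nonneg v) _)
        _ = ‖v‖ ^ (α - a + 1) * ∫ x : (EuclideanSpace ℝ (Fin d)), ‖fderiv ℝ g x‖ := by
            rw [Real.rpow_add hv0, Real.rpow_one]; ring
        _ ≤ 1 * ∫ x : (EuclideanSpace ℝ (Fin d)), ‖fderiv ℝ g x‖ :=
            mul_le_mul_of_nonneg_right
              (Real.rpow_le_one (norm_nonneg v) hv1 (by linarith)) hL0
        _ = ∫ x : (EuclideanSpace ℝ (Fin d)), ‖fderiv ℝ g x‖ := one_mul _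
    have hSne : S.Nonempty := by
      have hv : ‖(EuclideanSpace.single (⟨0, hd⟩ : Fin d) (1:ℝ) : (EuclideanSpace ℝ (Fin d)))‖ = 1 := by
        rw [EuclideanSpace.norm_single]; norm_num
      exact ⟨_, ⟨EuclideanSpace.single (⟨0, hd⟩ : Fin d) (1:ℝ), by rw [hv]; norm_num,
        by rw [hv], rfl⟩⟩
    set M := sSup S with hMdef
    have hMmem : ∀ v : (EuclideanSpace ℝ (Fin d)), 0 < ‖v‖ → ‖v‖ ≤ 1 →
        ‖v‖ ^ (α - a) * ∫ x, |g (x + v) - g x| ≤ M :=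
      fun v h1 h2 => le_csSup hSb ⟨v, h1, h2, rfl⟩
    have hM0 : 0 ≤ M := by
      obtain ⟨p, hp⟩ := hSne
      obtain ⟨v, h1, h2, rfl⟩ := hp
      exact le_trans (mul_nonneg (Real.rpow_nonneg (norm_nonneg v) _) (hω0 v))
        (le_csSup hSb ⟨v, h1, h2, rfl⟩)
    have key : ∀ v : (EuclideanSpace ℝ (Fin d)), 0 < ‖v‖ → ‖v‖ ≤ 1 →
        (‖v‖ ^ (α - a) * ∫ x, |g (x + v) - g x|) ≤ κ * c ^ (-α) + M / 2 := by
      intro v hv0 hv1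
      set r : ℝ := c * ‖v‖ with hrdef
      have hr0 : 0 < r := mul_pos hcpos hv0
      have hr1 : r ≤ 1 := by nlinarith
      have hB0 : 0 ≤ r ^ (a - α) * M := mul_nonneg (Real.rpow_nonneg hr0.le _) hM0
      have hωB : ∀ y : (EuclideanSpace ℝ (Fin d)), ‖y‖ < r → ∫ x, |g (x - y) - g x| ≤ r ^ (a - α) * M := by
        intro y hy
        rcases eq_or_ne y 0 with rfl | hy0
        · simpa using hB0
        · have hny : 0 < ‖y‖ := norm_pos_iff.2 hy0
          have hyM : ‖(-y : (EuclideanSpace ℝ (Fin d)))‖ ^ (α - a) * ∫ x, |g (x + -y) - g x| ≤ M :=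
            hMmem (-y) (by simpa using hny) (by rw [norm_neg]; exact (hy.trans_le hr1).le)
          have hωy : (∫ x, |g (x - y) - g x|) = ∫ x, |g (x + -y) - g x| := by
            simp only [sub_eq_add_neg]
          have h1 : (∫ x, |g (x + -y) - g x|)
              = ‖y‖ ^ (a - α) * (‖(-y : (EuclideanSpace ℝ (Fin d)))‖ ^ (α - a) * ∫ x, |g (x + -y) - g x|) := by
            rw [norm_neg, ← mul_assoc, ← Real.rpow_add hny,
              show a - α + (α - a) = 0 by ring, Real.rpow_zero, one_mul]
          rw [hωy, h1]
          calc ‖y‖ ^ (a - α) * (‖(-y : (EuclideanSpace ℝ (Fin d)))‖ ^ (α - a) * ∫ x, |g (x + -y) - g x|)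
              ≤ ‖y‖ ^ (a - α) * M :=
                mul_le_mul_of_nonneg_left hyM (Real.rpow_nonneg (norm_nonneg y) _)
            _ ≤ r ^ (a - α) * M :=
                mul_le_mul_of_nonneg_right
                  (Real.rpow_le_rpow (norm_nonneg y) hy.le haα.le) hM0
      obtain ⟨hconvint, hconvbound⟩ := approx_bound hd g hg.continuous hgi hr0 hB0 hωB
      have hgih : Integrable (fun x : (EuclideanSpace ℝ (Fin d)) => g (x + v)) := hgi.comp_add_right v
      have hA : Integrable (fun x : (EuclideanSpace ℝ (Fin d)) => g (x + v) - g x) := hgih.sub hgi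
      have hTgh : Integrable
          (fun x : (EuclideanSpace ℝ (Fin d)) => (∫ z, g z * chiBall d r (x + v - z)) - g (x + v)) :=
        hconvint.comp_add_right v
      have hTh : Integrable
          (fun x : (EuclideanSpace ℝ (Fin d)) => (∫ z, g z * chiBall d r (x + v - z)) - ∫ z, g z * chiBall d r (x - z)) :=
        ((hTgh.add hA).add hconvint.neg).congr (Filter.Eventually.of_forall fun x => by
          simp only [Pi.add_apply, Pi.sub_apply, Pi.neg_apply]; ring)
      have hBC : Integrable (fun x : (EuclideanSpace ℝ (Fin d)) =>
          |(∫ z, g z * chiBall d r (x + v - z)) - ∫ z, g z * chiBall d r (x - z)|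
            + |(∫ z, g z * chiBall d r (x - z)) - g x|) :=
        (hTh.abs.add hconvint.abs).congr (Filter.Eventually.of_forall fun x => rfl)
      have hsum : Integrable (fun x : (EuclideanSpace ℝ (Fin d)) =>
          |(∫ z, g z * chiBall d r (x + v - z)) - g (x + v)|
            + (|(∫ z, g z * chiBall d r (x + v - z)) - ∫ z, g z * chiBall d r (x - z)|
              + |(∫ z, g z * chiBall d r (x - z)) - g x|)) :=
        (hTgh.abs.add hBC).congr (Filter.Eventually.of_forall fun x => rfl)
      have hhyp := hyp r hr0 hr1 v hv1
      have htri : (∫ x, |g (x + v) - g x|)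
          ≤ r ^ (a - α) * M + κ * ‖v‖ ^ a * r ^ (-α) + r ^ (a - α) * M := by
        have step1 : (∫ x, |g (x + v) - g x|)
            ≤ ∫ x, (|(∫ z, g z * chiBall d r (x + v - z)) - g (x + v)|
              + (|(∫ z, g z * chiBall d r (x + v - z)) - ∫ z, g z * chiBall d r (x - z)|
                + |(∫ z, g z * chiBall d r (x - z)) - g x|)) := by
          refine integral_mono_of_nonneg (Filter.Eventually.of_forall fun x => abs_nonneg _)
            hsum
            (Filter.Eventually.of_forall fun x => ?_)
          calc |g (x + v) - g x|
              ≤ |g (x + v) - (∫ z, g z * chiBall d r (x + v - z))|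
                + |(∫ z, g z * chiBall d r (x + v - z)) - g x| := abs_sub_le _ _ _
            _ ≤ |g (x + v) - (∫ z, g z * chiBall d r (x + v - z))|
                + (|(∫ z, g z * chiBall d r (x + v - z)) - ∫ z, g z * chiBall d r (x - z)|
                  + |(∫ z, g z * chiBall d r (x - z)) - g x|) :=
                add_le_add_right (abs_sub_le _ _ _) _
            _ = |(∫ z, g z * chiBall d r (x + v - z)) - g (x + v)|
                + (|(∫ z, g z * chiBall d r (x + v - z)) - ∫ z, g z * chiBall d r (x - z)|
                  + |(∫ z, g z * chiBall d r (x - z)) - g x|) := by rw [abs_sub_comm]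
        have step2 : (∫ x, (|(∫ z, g z * chiBall d r (x + v - z)) - g (x + v)|
              + (|(∫ z, g z * chiBall d r (x + v - z)) - ∫ z, g z * chiBall d r (x - z)|
                + |(∫ z, g z * chiBall d r (x - z)) - g x|)))
            = (∫ x, |(∫ z, g z * chiBall d r (x + v - z)) - g (x + v)|)
              + ((∫ x, |(∫ z, g z * chiBall d r (x + v - z)) - ∫ z, g z * chiBall d r (x - z)|)
                + ∫ x, |(∫ z, g z * chiBall d r (x - z)) - g x|) := by
          rw [integral_add hTgh.abs hBC, integral_add hTh.abs hconvint.abs]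
        have e1 : (∫ x, |(∫ z, g z * chiBall d r (x + v - z)) - g (x + v)|)
            = ∫ x, |(∫ z, g z * chiBall d r (x - z)) - g x| :=
          integral_add_right_eq_self
            (fun x => |(∫ z, g z * chiBall d r (x - z)) - g x|) v
        have e3 : (∫ x, |(∫ z, g z * chiBall d r (x + v - z)) - ∫ z, g z * chiBall d r (x - z)|)
            ≤ κ * ‖v‖ ^ a * r ^ (-α) := hhyp
        rw [step2, e1] at step1
        linarith [hconvbound]
      have hmul := mul_le_mul_of_nonneg_left htri (Real.rpow_nonneg (norm_nonneg v) (α - a))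
      have ht1 : ‖v‖ ^ (α - a) * ‖v‖ ^ a * ‖v‖ ^ (-α) = 1 := by
        rw [← Real.rpow_add hv0, ← Real.rpow_add hv0,
          show α - a + a + -α = 0 by ring, Real.rpow_zero]
      have ht2 : ‖v‖ ^ (α - a) * ‖v‖ ^ (a - α) = 1 := by
        rw [← Real.rpow_add hv0, show α - a + (a - α) = 0 by ring, Real.rpow_zero]
      have hrpow1 : r ^ (-α) = c ^ (-α) * ‖v‖ ^ (-α) := by
        rw [hrdef, Real.mul_rpow hcpos.le (norm_nonneg v)]
      have hrpow2 : r ^ (a - α) = c ^ (a - α) * ‖v‖ ^ (a - α) := by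
        rw [hrdef, Real.mul_rpow hcpos.le (norm_nonneg v)]
      calc ‖v‖ ^ (α - a) * ∫ x, |g (x + v) - g x|
          ≤ ‖v‖ ^ (α - a) * (r ^ (a - α) * M + κ * ‖v‖ ^ a * r ^ (-α) + r ^ (a - α) * M) :=
            hmul
        _ = κ * c ^ (-α) * (‖v‖ ^ (α - a) * ‖v‖ ^ a * ‖v‖ ^ (-α))
            + 2 * M * c ^ (a - α) * (‖v‖ ^ (α - a) * ‖v‖ ^ (a - α)) := by
            rw [hrpow1, hrpow2]; ring
        _ = κ * c ^ (-α) + M / 2 := by rw [ht1, ht2, hcpow]; ring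
    have hMle : M ≤ κ * c ^ (-α) + M / 2 := by
      refine csSup_le hSne fun p hp => ?_
      obtain ⟨v, h1, h2, rfl⟩ := hp
      exact key v h1 h2
    have hM2 : M ≤ 2 * c ^ (-α) * κ := by linarith
    exact (hMmem h hpos hle).trans hM2
end

section
/- With Γ(X,φ) = cos φ · I(X) + sin φ · J(X), where (X/|X|, I(X)/|X|, J(X)/|X|) is an orthonormal basis of ℝ³ (and I(0)=J(0)=0): for any measurable non-negative function F: ℝ → ℝ and any X, ξ ∈ ℝ³, ∫₀^{2π} F(⟨ξ, Γ(X,φ)⟩) dφ = ∫₀^{2π} F(⟨X, Γ(ξ,φ)⟩) dφ. In particular, the left-hand side is independent of the choice of orthonormal completion (I(X), J(X)). -/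
open MeasureTheory RealInnerProductSpace Real
open scoped ENNReal

set_option maxHeartbeats 800000 in
private lemma lint_periodic_shift (g : ℝ → ℝ≥0∞)
    (hp : Function.Periodic g (2 * Real.pi)) (θ : ℝ) :
    ∫⁻ φ in Set.Ioc (0 : ℝ) (2 * Real.pi), g (φ - θ)
      = ∫⁻ φ in Set.Ioc (0 : ℝ) (2 * Real.pi), g φ := by
  have hT : (0 : ℝ) < 2 * Real.pi := by positivity
  have h1 : ∫⁻ φ in Set.Ioc (0 : ℝ) (2 * Real.pi), g (φ - θ)
      = ∫⁻ φ in Set.Ioc (-θ) (-θ + 2 * Real.pi), g φ := by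
    have hmp : MeasurePreserving (fun x : ℝ => x - θ) volume volume :=
      measurePreserving_sub_right volume θ
    have hemb : MeasurableEmbedding (fun x : ℝ => x - θ) :=
      (MeasurableEquiv.subRight θ).measurableEmbedding
    have := hmp.setLIntegral_comp_emb hemb g (Set.Ioc (0 : ℝ) (2 * Real.pi))
    rw [this, Set.image_sub_const_Ioc]
    norm_num
    rw [show 2 * Real.pi - θ = -θ + 2 * Real.pi by ring]
  rw [h1]
  haveI : VAddInvariantMeasure (AddSubgroup.zmultiples (2 * Real.pi)) ℝ volume :=
    ⟨fun c s _ => measure_preimage_add _ _ _⟩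
  have h0 : Set.Ioc (0 : ℝ) (2 * Real.pi) = Set.Ioc (0 : ℝ) (0 + 2 * Real.pi) := by
    rw [zero_add]
  rw [h0]
  apply IsAddFundamentalDomain.setLIntegral_eq (G := AddSubgroup.zmultiples (2 * Real.pi))
  exacts [isAddFundamentalDomain_Ioc hT (-θ), isAddFundamentalDomain_Ioc hT 0,
    hp.map_vadd_zmultiples]

private lemma lint_cos_sin (F : ℝ → ℝ) (a b : ℝ) :
    ∫⁻ φ in Set.Ioc (0 : ℝ) (2 * Real.pi),
        ENNReal.ofReal (F (a * Real.cos φ + b * Real.sin φ))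
      = ∫⁻ φ in Set.Ioc (0 : ℝ) (2 * Real.pi),
        ENNReal.ofReal (F (Real.sqrt (a ^ 2 + b ^ 2) * Real.cos φ)) := by
  set z : ℂ := ⟨a, b⟩ with hz
  set r : ℝ := ‖z‖ with hr
  set θ : ℝ := Complex.arg z with hθ
  have ha : a = r * Real.cos θ := by
    rw [hr, hθ, Complex.norm_mul_cos_arg]
  have hb : b = r * Real.sin θ := by
    rw [hr, hθ, Complex.norm_mul_sin_arg]
  have hrs : Real.sqrt (a ^ 2 + b ^ 2) = r := by
    rw [hr, Complex.norm_def, Complex.normSq_mk]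
    ring_nf
  have hkey : ∀ φ, a * Real.cos φ + b * Real.sin φ = r * Real.cos (φ - θ) := by
    intro φ
    conv_lhs => rw [ha, hb]
    rw [Real.cos_sub]
    ring
  simp_rw [hkey, hrs]
  exact lint_periodic_shift (fun φ => ENNReal.ofReal (F (r * Real.cos φ)))
    (fun x => by simp [Real.cos_add_two_pi]) θ

/-- With `Γ(X,φ) = cos φ · I(X) + sin φ · J(X)`, `(X/|X|, I(X)/|X|, J(X)/|X|)` an orthonormal
basis of `ℝ³` (`I(0)=J(0)=0`): for any measurable non-negative `F : ℝ → ℝ` and any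
`X, ξ ∈ ℝ³`, `∫₀^{2π} F(⟨ξ, Γ(X,φ)⟩) dφ = ∫₀^{2π} F(⟨X, Γ(ξ,φ)⟩) dφ`. -/
theorem stmt_14 (I J : EuclideanSpace ℝ (Fin 3) → EuclideanSpace ℝ (Fin 3))
    (hI0 : I 0 = 0) (hJ0 : J 0 = 0)
    (hIorth : ∀ X, ⟪X, I X⟫ = 0) (hJorth : ∀ X, ⟪X, J X⟫ = 0)
    (hIJ : ∀ X, ⟪I X, J X⟫ = 0)
    (hInorm : ∀ X, ‖I X‖ = ‖X‖) (hJnorm : ∀ X, ‖J X‖ = ‖X‖)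
    (F : ℝ → ℝ) (hF : Measurable F) (hF0 : ∀ t, 0 ≤ F t)
    (X ξ : EuclideanSpace ℝ (Fin 3)) :
    ∫⁻ φ in Set.Ioc (0 : ℝ) (2 * Real.pi),
        ENNReal.ofReal (F ⟪ξ, Real.cos φ • I X + Real.sin φ • J X⟫)
      = ∫⁻ φ in Set.Ioc (0 : ℝ) (2 * Real.pi),
        ENNReal.ofReal (F ⟪X, Real.cos φ • I ξ + Real.sin φ • J ξ⟫) := by
  have key : ∀ Y Z : EuclideanSpace ℝ (Fin 3),
      ⟪Z, I Y⟫ ^ 2 + ⟪Z, J Y⟫ ^ 2 = ‖Y‖ ^ 2 * ‖Z‖ ^ 2 - ⟪Y, Z⟫ ^ 2 := by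
    intro Y Z
    by_cases hY : Y = 0
    · simp [hY, hI0, hJ0]
    · have hYn : ‖Y‖ ≠ 0 := norm_ne_zero_iff.mpr hY
      set e : Fin 3 → EuclideanSpace ℝ (Fin 3) :=
        ![‖Y‖⁻¹ • Y, ‖Y‖⁻¹ • I Y, ‖Y‖⁻¹ • J Y] with he
      have hzero : ∀ u v : EuclideanSpace ℝ (Fin 3), ⟪u, v⟫ = 0 →
          ⟪‖Y‖⁻¹ • u, ‖Y‖⁻¹ • v⟫ = (0 : ℝ) := by
        intro u v h
        rw [real_inner_smul_left, real_inner_smul_right, h, mul_zero, mul_zero]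
      have h01 : ⟪e 0, e 1⟫ = (0 : ℝ) := hzero _ _ (hIorth Y)
      have h02 : ⟪e 0, e 2⟫ = (0 : ℝ) := hzero _ _ (hJorth Y)
      have h12 : ⟪e 1, e 2⟫ = (0 : ℝ) := hzero _ _ (hIJ Y)
      have horth : Orthonormal ℝ e := by
        constructor
        · intro i
          fin_cases i
          · show ‖‖Y‖⁻¹ • Y‖ = 1
            rw [norm_smul, norm_inv, norm_norm, inv_mul_cancel₀ hYn]
          · show ‖‖Y‖⁻¹ • I Y‖ = 1
            rw [norm_smul, norm_inv, norm_norm, hInorm, inv_mul_cancel₀ hYn]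
          · show ‖‖Y‖⁻¹ • J Y‖ = 1
            rw [norm_smul, norm_inv, norm_norm, hJnorm, inv_mul_cancel₀ hYn]
        · intro i j hij
          fin_cases i <;> fin_cases j <;>
            first
              | exact absurd rfl hij
              | exact h01
              | exact h02
              | exact h12
              | exact (real_inner_comm (e 0) (e 1)) ▸ h01
              | exact (real_inner_comm (e 0) (e 2)) ▸ h02
              | exact (real_inner_comm (e 1) (e 2)) ▸ h12
      have hcard : Fintype.card (Fin 3) = Module.finrank ℝ (EuclideanSpace ℝ (Fin 3)) := by
        simp
      set B := basisOfOrthonormalOfCardEqFinrank horth hcard with hBdef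
      have hB : ⇑B = e := coe_basisOfOrthonormalOfCardEqFinrank horth hcard
      have hO : Orthonormal ℝ ⇑B := hB ▸ horth
      set OB : OrthonormalBasis (Fin 3) ℝ (EuclideanSpace ℝ (Fin 3)) :=
        B.toOrthonormalBasis hO with hOBdef
      have hOBc : ⇑OB = ⇑B := Module.Basis.coe_toOrthonormalBasis B hO
      have hOB : ∀ i, OB i = e i := fun i =>
        (congrFun hOBc i).trans (congrFun hB i)
      have parseval := OB.sum_inner_mul_inner Z Z
      have hsum : ⟪Z, e 0⟫ ^ 2 + ⟪Z, e 1⟫ ^ 2 + ⟪Z, e 2⟫ ^ 2 = ‖Z‖ ^ 2 := by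
        rw [← real_inner_self_eq_norm_sq, ← parseval, Fin.sum_univ_three,
          hOB 0, hOB 1, hOB 2, real_inner_comm (e 0) Z, real_inner_comm (e 1) Z,
          real_inner_comm (e 2) Z]
        ring
      have h0 : ⟪Z, e 0⟫ = ‖Y‖⁻¹ * ⟪Y, Z⟫ := by
        rw [show ⟪Z, e 0⟫ = ⟪Z, ‖Y‖⁻¹ • Y⟫ from rfl, real_inner_smul_right,
          real_inner_comm]
      have h1 : ⟪Z, e 1⟫ = ‖Y‖⁻¹ * ⟪Z, I Y⟫ := by
        rw [show ⟪Z, e 1⟫ = ⟪Z, ‖Y‖⁻¹ • I Y⟫ from rfl, real_inner_smul_right]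
      have h2 : ⟪Z, e 2⟫ = ‖Y‖⁻¹ * ⟪Z, J Y⟫ := by
        rw [show ⟪Z, e 2⟫ = ⟪Z, ‖Y‖⁻¹ • J Y⟫ from rfl, real_inner_smul_right]
      rw [h0, h1, h2] at hsum
      have hone : ‖Y‖ ^ 2 * (‖Y‖⁻¹) ^ 2 = 1 := by
        rw [← mul_pow, mul_inv_cancel₀ hYn, one_pow]
      have key2 : ‖Y‖ ^ 2 * ‖Z‖ ^ 2
          = ‖Y‖ ^ 2 * ((‖Y‖⁻¹ * ⟪Y, Z⟫) ^ 2 + (‖Y‖⁻¹ * ⟪Z, I Y⟫) ^ 2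
            + (‖Y‖⁻¹ * ⟪Z, J Y⟫) ^ 2) := by rw [hsum]
      linear_combination (-1 : ℝ) * key2
        - (⟪Y, Z⟫ ^ 2 + ⟪Z, I Y⟫ ^ 2 + ⟪Z, J Y⟫ ^ 2) * hone
  have expand : ∀ (Y Z : EuclideanSpace ℝ (Fin 3)) (φ : ℝ),
      ⟪Z, Real.cos φ • I Y + Real.sin φ • J Y⟫
        = ⟪Z, I Y⟫ * Real.cos φ + ⟪Z, J Y⟫ * Real.sin φ := by
    intro Y Z φ
    rw [inner_add_right, real_inner_smul_right, real_inner_smul_right]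
    ring
  simp_rw [expand]
  rw [lint_cos_sin F ⟪ξ, I X⟫ ⟪ξ, J X⟫, lint_cos_sin F ⟪X, I ξ⟫ ⟪X, J ξ⟫]
  have heq : ⟪ξ, I X⟫ ^ 2 + ⟪ξ, J X⟫ ^ 2 = ⟪X, I ξ⟫ ^ 2 + ⟪X, J ξ⟫ ^ 2 := by
    rw [key X ξ, key ξ X, real_inner_comm]
    ring
  rw [heq]
end
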